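/- Let H be a real Hilbert space, let f : H → ℝ be a convex function, let x̄, x ∈ H, let Δ > 0 and L̄ > 0, and suppose f is L̄-Lipschitz on the closed ball B(x̄, Δ/(4L̄)) centered at x̄ of radius Δ/(4L̄). Assume f(x) > f(x̄) + Δ and let v be a subgradient of f at x. Then v ≠ 0 and ⟨v/‖v‖, x̄ − x⟩ < −Δ/(4L̄). -/

import Mathlib

open scoped InnerProductSpace

/-- Let `H` be a real Hilbert space, `f : H → ℝ` convex, `Δ > 0`, `Lb > 0`, and suppose
`f` is `Lb`-Lipschitz on the closed ball `B(xb, Δ/(4·Lb))` centered at `xb`. If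
`f x > f xb + Δ` and `v` is a subgradient of `f` at `x`, then `v ≠ 0` and
`⟪v/‖v‖, xb − x⟫ < −Δ/(4·Lb)`. -/
theorem subgradient_direction_inequality
    {H : Type*} [NormedAddCommGroup H] [InnerProductSpace ℝ H] [CompleteSpace H]
    (f : H → ℝ) (hf : ConvexOn ℝ Set.univ f)
    (xb x : H) (Δ Lb : ℝ) (hΔ : 0 < Δ) (hL : 0 < Lb)
    (hlip : ∀ z₁ ∈ Metric.closedBall xb (Δ / (4 * Lb)),
            ∀ z₂ ∈ Metric.closedBall xb (Δ / (4 * Lb)),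
              |f z₁ - f z₂| ≤ Lb * ‖z₁ - z₂‖)
    (hx : f x > f xb + Δ)
    (v : H) (hv : ∀ z : H, f x + ⟪v, z - x⟫_ℝ ≤ f z) :
    v ≠ 0 ∧ ⟪‖v‖⁻¹ • v, xb - x⟫_ℝ < -(Δ / (4 * Lb)) := by
  set r : ℝ := Δ / (4 * Lb) with hr_def
  have hr : 0 < r := div_pos hΔ (by positivity)
  -- key: for any z in the ball, ⟪v, z - x⟫ < -(3*Δ/4)
  have key : ∀ z ∈ Metric.closedBall xb r, ⟪v, z - x⟫_ℝ < -(3 * Δ / 4) := by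
    intro z hz
    have hxb : xb ∈ Metric.closedBall xb r := Metric.mem_closedBall_self hr.le
    have h1 : |f z - f xb| ≤ Lb * ‖z - xb‖ := hlip z hz xb hxb
    have h2 : ‖z - xb‖ ≤ r := by
      rw [← dist_eq_norm]; exact Metric.mem_closedBall.mp hz
    have h3 : f z ≤ f xb + Δ / 4 := by
      have := (abs_le.mp h1).2
      have hLr : Lb * ‖z - xb‖ ≤ Lb * r := by
        exact mul_le_mul_of_nonneg_left h2 hL.le
      have : f z - f xb ≤ Lb * r := le_trans this hLr
      have hLrval : Lb * r = Δ / 4 := by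
        rw [hr_def]; field_simp
      linarith
    have h4 := hv z
    linarith
  have hxbmem : xb ∈ Metric.closedBall xb r := Metric.mem_closedBall_self hr.le
  have hxbkey := key xb hxbmem
  have hvne : v ≠ 0 := by
    intro h
    rw [h] at hxbkey
    simp at hxbkey
    linarith
  refine ⟨hvne, ?_⟩
  have hnv : 0 < ‖v‖ := norm_pos_iff.mpr hvne
  -- take z = xb + r • (‖v‖⁻¹ • v)
  set z := xb + r • ‖v‖⁻¹ • v with hz_def
  have hzmem : z ∈ Metric.closedBall xb r := by
    rw [Metric.mem_closedBall, dist_eq_norm, hz_def]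
    have : xb + r • ‖v‖⁻¹ • v - xb = r • ‖v‖⁻¹ • v := by abel
    rw [this, norm_smul, norm_smul, norm_inv, norm_norm]
    rw [Real.norm_eq_abs, abs_of_pos hr]
    rw [inv_mul_cancel₀ hnv.ne', mul_one]
  have hzkey := key z hzmem
  have hinner : ⟪v, z - x⟫_ℝ = ⟪v, xb - x⟫_ℝ + r * ‖v‖ := by
    have : z - x = (xb - x) + r • ‖v‖⁻¹ • v := by rw [hz_def]; abel
    rw [this, inner_add_right, real_inner_smul_right, real_inner_smul_right,
      real_inner_self_eq_norm_sq]
    field_simp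
  have h5 : ⟪v, xb - x⟫_ℝ < -(3 * Δ / 4) - r * ‖v‖ := by linarith [hzkey, hinner.symm.le]
  have h6 : ⟪‖v‖⁻¹ • v, xb - x⟫_ℝ = ‖v‖⁻¹ * ⟪v, xb - x⟫_ℝ := real_inner_smul_left _ _ _
  rw [h6]
  have h7 : ‖v‖⁻¹ * ⟪v, xb - x⟫_ℝ < ‖v‖⁻¹ * (-(3 * Δ / 4) - r * ‖v‖) :=
    mul_lt_mul_of_pos_left h5 (inv_pos.mpr hnv)
  have h8 : ‖v‖⁻¹ * (-(3 * Δ / 4) - r * ‖v‖) = -(3 * Δ / 4) * ‖v‖⁻¹ - r := by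
    field_simp
  have h9 : -(3 * Δ / 4) * ‖v‖⁻¹ < 0 := by
    apply mul_neg_of_neg_of_pos <;> [linarith; positivity]
  linarith
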